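/- Let (X, →, ≤) be a finitely branching ordered transition system where ≤ is a quasi-ordering with no infinite antichain, satisfying upward transitive monotonicity and downward transitive monotonicity. Then for every x_0 ∈ X, there exists an infinite run x_0 → x_1 → x_2 → ⋯ if, and only if, there exist states y, z ∈ X with x_0 →* y, y →+ z, and (y ≤ z or z ≤ y). -/
import Mathlib

/-- Concatenation lemma: if every element of `S` can reach (in ≥1 step) another
element of `S`, and `x₀` can reach some element of `S`, then there is an
infinite run from `x₀`. -/
lemma aux_concat {X : Type*} (step : X → X → Prop) (S : Set X)
    (hS : ∀ a ∈ S, ∃ b ∈ S, Relation.TransGen step a b)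
    (x₀ y : X) (hx : Relation.ReflTransGen step x₀ y) (hy : y ∈ S) :
    ∃ f : ℕ → X, f 0 = x₀ ∧ ∀ n, step (f n) (f (n + 1)) := by
  set T : Set X := {b | ∃ c ∈ S, Relation.ReflTransGen step b c} with hT
  have hx0T : x₀ ∈ T := ⟨y, hy, hx⟩
  have hTstep : ∀ b ∈ T, ∃ b', step b b' ∧ b' ∈ T := by
    rintro b ⟨c, hcS, hbc⟩
    rcases Relation.ReflTransGen.cases_head hbc with heq | ⟨d, hbd, hdc⟩
    · subst heq
      obtain ⟨e, heS, hbe⟩ := hS b hcS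
      rcases (Relation.TransGen.head'_iff).mp hbe with ⟨d, hbd, hde⟩
      exact ⟨d, hbd, e, heS, hde⟩
    · exact ⟨d, hbd, c, hcS, hdc⟩
  choose g hg1 hg2 using hTstep
  let F : ℕ → {b // b ∈ T} := fun n =>
    Nat.rec ⟨x₀, hx0T⟩ (fun _ p => ⟨g p.1 p.2, hg2 p.1 p.2⟩) n
  exact ⟨fun n => (F n).1, rfl, fun n => hg1 (F n).1 (F n).2⟩

/-- For a finitely branching ordered transition system whose
quasi-ordering has no infinite antichain, with upward and downward transitive
monotonicity, there is an infinite run from `x₀` iff some state `y` reachable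
from `x₀` can reach (in at least one step) a state `z` comparable with `y`. -/
theorem stmt_9 {X : Type*} (step le : X → X → Prop)
    (hrefl : ∀ x, le x x)
    (htrans : ∀ x y z, le x y → le y z → le x z)
    (hfin : ∀ x : X, {y | step x y}.Finite)
    (hac : ∀ A : Set X, (∀ a ∈ A, ∀ b ∈ A, a ≠ b → ¬ le a b ∧ ¬ le b a) → A.Finite)
    (hup : ∀ x y x', step x y → le x x' →
      ∃ y', le y y' ∧ Relation.TransGen step x' y')
    (hdown : ∀ x y x', step x y → le x' x →
      ∃ y', le y' y ∧ Relation.TransGen step x' y')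
    (x₀ : X) :
    (∃ f : ℕ → X, f 0 = x₀ ∧ ∀ n, step (f n) (f (n + 1))) ↔
    (∃ y z : X, Relation.ReflTransGen step x₀ y ∧ Relation.TransGen step y z ∧
      (le y z ∨ le z y)) := by
  constructor
  · rintro ⟨f, hf0, hstep⟩
    have hrt : ∀ m n, m ≤ n → Relation.ReflTransGen step (f m) (f n) := by
      intro m n h
      induction n, h using Nat.le_induction with
      | base => exact .refl
      | succ n hmn ih => exact ih.tail (hstep n)
    have ht : ∀ m n, m < n → Relation.TransGen step (f m) (f n) := by
      intro m n h
      exact Relation.TransGen.head' (hstep m) (hrt (m + 1) n h)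
    by_cases hinj : Function.Injective f
    · have hinf : (Set.range f).Infinite := Set.infinite_range_of_injective hinj
      have : ¬ (∀ a ∈ Set.range f, ∀ b ∈ Set.range f, a ≠ b → ¬ le a b ∧ ¬ le b a) := by
        intro h
        exact hinf (hac _ h)
      push_neg at this
      obtain ⟨a, ⟨m, rfl⟩, b, ⟨n, rfl⟩, hne, hcomp⟩ := this
      have hcomp' : le (f m) (f n) ∨ le (f n) (f m) := by tauto
      have hmn : m ≠ n := fun h => hne (by rw [h])
      rcases lt_or_gt_of_ne hmn with h | h
      · exact ⟨f m, f n, hf0 ▸ hrt 0 m (Nat.zero_le m), ht m n h, hcomp'⟩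
      · exact ⟨f n, f m, hf0 ▸ hrt 0 n (Nat.zero_le n), ht n m h, hcomp'.symm⟩
    · simp only [Function.Injective, not_forall] at hinj
      obtain ⟨m, n, hfeq, hmn⟩ := hinj
      rcases lt_or_gt_of_ne hmn with h | h
      · exact ⟨f m, f n, hf0 ▸ hrt 0 m (Nat.zero_le m), ht m n h,
          Or.inl (hfeq ▸ hrefl (f m))⟩
      · exact ⟨f n, f m, hf0 ▸ hrt 0 n (Nat.zero_le n), ht n m h,
          Or.inl (hfeq ▸ hrefl (f n))⟩
  · rintro ⟨y, z, hxy, hyz, hcomp⟩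
    have hup' : ∀ a b a', Relation.TransGen step a b → le a a' →
        ∃ b', le b b' ∧ Relation.TransGen step a' b' := by
      intro a b a' hab
      induction hab with
      | single h => exact fun hle => hup _ _ _ h hle
      | tail hab h ih =>
        intro hle
        obtain ⟨b', hbb', hab'⟩ := ih hle
        obtain ⟨c', hcc', hbc'⟩ := hup _ _ _ h hbb'
        exact ⟨c', hcc', hab'.trans hbc'⟩
    have hdown' : ∀ a b a', Relation.TransGen step a b → le a' a →
        ∃ b', le b' b ∧ Relation.TransGen step a' b' := by
      intro a b a' hab
      induction hab with
      | single h => exact fun hle => hdown _ _ _ h hle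
      | tail hab h ih =>
        intro hle
        obtain ⟨b', hbb', hab'⟩ := ih hle
        obtain ⟨c', hcc', hbc'⟩ := hdown _ _ _ h hbb'
        exact ⟨c', hcc', hab'.trans hbc'⟩
    rcases hcomp with hle | hle
    · refine aux_concat step {a | ∃ b, le a b ∧ Relation.TransGen step a b} ?_ x₀ y hxy
        ⟨z, hle, hyz⟩
      rintro a ⟨b, hab, habt⟩
      obtain ⟨b', hbb', hbt⟩ := hup' a b b habt hab
      exact ⟨b, ⟨b', hbb', hbt⟩, habt⟩
    · refine aux_concat step {a | ∃ b, le b a ∧ Relation.TransGen step a b} ?_ x₀ y hxy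
        ⟨z, hle, hyz⟩
      rintro a ⟨b, hab, habt⟩
      obtain ⟨b', hbb', hbt⟩ := hdown' a b b habt hab
      exact ⟨b, ⟨b', hbb', hbt⟩, habt⟩
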